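/- The numerical semigroup S = ⟨4, 5, 11⟩ is nearly Gorenstein but not almost symmetric; specifically PF(S) = {6, 7} and (7, 6, 6) is an NG-vector for S. -/
import Mathlib


/-- A numerical semigroup: a subset of ℕ containing 0, closed under addition,
with finite complement. -/
def IsNumSgp (S : Set ℕ) : Prop :=
  0 ∈ S ∧ (∀ a ∈ S, ∀ b ∈ S, a + b ∈ S) ∧ (Sᶜ : Set ℕ).Finite

/-- An integer belongs to (the image in ℤ of) S. -/
def memZ (S : Set ℕ) (z : ℤ) : Prop := ∃ s ∈ S, (s : ℤ) = z

/-- F is the Frobenius number of S: the largest natural number not in S. -/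
def IsFrob (S : Set ℕ) (F : ℕ) : Prop := F ∉ S ∧ ∀ n, F < n → n ∈ S

/-- The set of pseudo-Frobenius numbers of S. -/
def PF (S : Set ℕ) : Set ℕ := {f | f ∉ S ∧ ∀ s ∈ S, s ≠ 0 → f + s ∈ S}

/-- n is a minimal generator of S. -/
def IsMinGen (S : Set ℕ) (n : ℕ) : Prop :=
  n ∈ S ∧ n ≠ 0 ∧ ¬∃ a ∈ S, ∃ b ∈ S, a ≠ 0 ∧ b ≠ 0 ∧ a + b = n

/-- S is almost symmetric (Nari): F - f ∈ PF(S) for every f ∈ PF(S). -/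
def AlmostSym (S : Set ℕ) (F : ℕ) : Prop :=
  ∀ f ∈ PF S, ∃ g ∈ PF S, (g : ℤ) = (F : ℤ) - (f : ℤ)

/-- S is symmetric: PF(S) = {F(S)} (vacuously true when S = ℕ). -/
def IsSym (S : Set ℕ) : Prop := ∀ F, IsFrob S F → PF S = {F}

/-- (f_1,...,f_ν) is an NG-vector for S with minimal generators n_1,...,n_ν. -/
def IsNGVector {ν : ℕ} (S : Set ℕ) (n f : Fin ν → ℕ) : Prop :=
  ∀ i, f i ∈ PF S ∧ ∀ g ∈ PF S, memZ S ((n i : ℤ) + (f i : ℤ) - (g : ℤ))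

/-- S is nearly Gorenstein (generator criterion): for each minimal generator m
there is f ∈ PF(S) with m + f - g ∈ S for all g ∈ PF(S). -/
def NearlyGGen (S : Set ℕ) : Prop :=
  ∀ m, IsMinGen S m → ∃ f ∈ PF S, ∀ g ∈ PF S, memZ S ((m : ℤ) + (f : ℤ) - (g : ℤ))

/-- The canonical ideal K(S) = {z ∈ ℤ : F - z ∉ S}. -/
def Kan (S : Set ℕ) (F : ℕ) : Set ℤ := {z | ¬ memZ S ((F : ℤ) - z)}

/-- The relative ideal (S - K(S)) = {z ∈ ℤ : z + K(S) ⊆ S}. -/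
def SmK (S : Set ℕ) (F : ℕ) : Set ℤ := {z | ∀ k ∈ Kan S F, memZ S (z + k)}

/-- S is nearly Gorenstein: M(S) ⊆ K(S) + (S - K(S)). -/
def NearlyG (S : Set ℕ) (F : ℕ) : Prop :=
  ∀ m ∈ S, m ≠ 0 → ∃ k ∈ Kan S F, ∃ x ∈ SmK S F, k + x = (m : ℤ)

lemma memS18 (S : Set ℕ) (hS : S = {m : ℕ | ∃ a b c : ℕ, 4 * a + 5 * b + 11 * c = m})
    (n : ℕ) : n ∈ S ↔ (n = 0 ∨ n = 4 ∨ n = 5 ∨ 8 ≤ n) := by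
  subst hS
  simp only [Set.mem_setOf_eq]
  constructor
  · rintro ⟨a, b, c, h⟩
    rcases Nat.lt_or_ge a 2 with ha | ha
    · rcases Nat.lt_or_ge b 2 with hb | hb
      · rcases Nat.eq_zero_or_pos c with hc | hc
        · interval_cases a <;> interval_cases b <;> omega
        · omega
      · omega
    · omega
  · intro h
    have h4 : n % 4 = 0 ∨ n % 4 = 1 ∨ n % 4 = 2 ∨ n % 4 = 3 := by omega
    rcases h4 with h4 | h4 | h4 | h4
    · exact ⟨n / 4, 0, 0, by omega⟩
    · exact ⟨n / 4 - 1, 1, 0, by omega⟩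
    · exact ⟨n / 4 - 2, 2, 0, by omega⟩
    · exact ⟨n / 4 - 2, 0, 1, by omega⟩

lemma PF18 (S : Set ℕ) (hS : S = {m : ℕ | ∃ a b c : ℕ, 4 * a + 5 * b + 11 * c = m}) :
    PF S = {6, 7} := by
  have hm := memS18 S hS
  ext f
  simp only [PF, Set.mem_setOf_eq, Set.mem_insert_iff, Set.mem_singleton_iff]
  constructor
  · rintro ⟨hf, hcl⟩
    have h4 := hcl 4 ((hm 4).2 (by omega)) (by omega)
    have h5 := hcl 5 ((hm 5).2 (by omega)) (by omega)
    rw [hm] at hf h4 h5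
    omega
  · rintro (rfl | rfl) <;>
    · refine ⟨by rw [hm]; omega, fun s hs hs0 => ?_⟩
      rw [hm] at hs ⊢
      omega

theorem stmt18 (S : Set ℕ) (hS : S = {m : ℕ | ∃ a b c : ℕ, 4 * a + 5 * b + 11 * c = m}) :
    PF S = {6, 7} ∧
    IsNGVector S ![4, 5, 11] ![7, 6, 6] ∧
    NearlyGGen S ∧
    ¬ AlmostSym S 7 := by
  have hm := memS18 S hS
  have hPF := PF18 S hS
  have h4 : (4 : ℕ) ∈ S := (hm 4).2 (by omega)
  have h5 : (5 : ℕ) ∈ S := (hm 5).2 (by omega)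
  have h10 : (10 : ℕ) ∈ S := (hm 10).2 (by omega)
  have h11 : (11 : ℕ) ∈ S := (hm 11).2 (by omega)
  have key : ∀ m fv : ℕ, (m + fv = 11 ∨ m + fv = 17) →
      ∀ g ∈ PF S, memZ S ((m : ℤ) + (fv : ℤ) - (g : ℤ)) := by
    intro m fv hfv g hg
    rw [hPF] at hg
    simp only [Set.mem_insert_iff, Set.mem_singleton_iff] at hg
    refine ⟨m + fv - g, (hm _).2 (by omega), by omega⟩
  refine ⟨hPF, ?_, ?_, ?_⟩
  · intro i
    have h6 : (6 : ℕ) ∈ PF S := by rw [hPF]; left; rfl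
    have h7 : (7 : ℕ) ∈ PF S := by rw [hPF]; right; rfl
    fin_cases i <;> simp only [Matrix.cons_val_zero, Matrix.cons_val_one, Matrix.head_cons,
      Matrix.cons_val_two, Matrix.tail_cons]
    · exact ⟨h7, key 4 7 (by omega)⟩
    · exact ⟨h6, key 5 6 (by omega)⟩
    · exact ⟨h6, key 11 6 (by omega)⟩
  · rintro m ⟨hmS, hm0, hmin⟩
    have hmv : m = 4 ∨ m = 5 ∨ m = 11 := by
      rw [hm] at hmS
      rcases hmS with rfl | rfl | rfl | h8
      · omega
      · left; rfl
      · right; left; rfl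
      · by_contra hc
        push_neg at hc
        apply hmin
        rcases Nat.lt_or_ge m 11 with h | h
        · -- m ∈ {8,9,10}
          rcases (by omega : m = 8 ∨ m = 9 ∨ m = 10) with rfl | rfl | rfl
          · exact ⟨4, h4, 4, h4, by omega, by omega, rfl⟩
          · exact ⟨4, h4, 5, h5, by omega, by omega, rfl⟩
          · exact ⟨5, h5, 5, h5, by omega, by omega, rfl⟩
        · exact ⟨4, h4, m - 4, (hm _).2 (by omega), by omega, by omega, by omega⟩
    have h6 : (6 : ℕ) ∈ PF S := by rw [hPF]; left; rfl
    have h7 : (7 : ℕ) ∈ PF S := by rw [hPF]; right; rfl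
    rcases hmv with rfl | rfl | rfl
    · exact ⟨7, h7, key 4 7 (by omega)⟩
    · exact ⟨6, h6, key 5 6 (by omega)⟩
    · exact ⟨6, h6, key 11 6 (by omega)⟩
  · intro hAS
    have h6 : (6 : ℕ) ∈ PF S := by rw [hPF]; left; rfl
    obtain ⟨g, hg, hgeq⟩ := hAS 6 h6
    rw [hPF] at hg
    simp only [Set.mem_insert_iff, Set.mem_singleton_iff] at hg
    omega
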